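/- Let C_{L−1}, C_{L−2}, …, C_0 be matchings in a finite simple graph G, and let T be the set produced by the greedy procedure applied to the concatenated list of the edges of C_{L−1}, then C_{L−2}, and so on down to C_0. Then for every index i and every edge e ∈ C_i with e ∉ T, there exists an edge f ∈ T such that f shares an endpoint with e and f ∈ C_j for some j ≥ i. -/

import Mathlib

/-- Two edges (as unordered pairs of vertices) share an endpoint. -/
def Shares {V : Type*} (e f : Sym2 V) : Prop := ∃ v, v ∈ e ∧ v ∈ f

/-- `M` is a matching whose edges are drawn from the edge set `E`:
no two distinct edges of `M` share an endpoint. -/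
def IsMatchingOf {V : Type*} (E : Set (Sym2 V)) (M : Finset (Sym2 V)) : Prop :=
  (∀ e ∈ M, e ∈ E) ∧ ∀ e ∈ M, ∀ f ∈ M, e ≠ f → ¬ Shares e f

open scoped Classical in
/-- The greedy procedure: process the edges of the list `l` in order, starting from `∅`,
and add an edge to the current set `T` iff neither of its endpoints is an endpoint of an
edge already in `T`. -/
noncomputable def greedy {V : Type*} (l : List (Sym2 V)) : Finset (Sym2 V) :=
  l.foldl (fun T e => if ∀ f ∈ T, ¬ Shares e f then insert e T else T) ∅

/-- The concatenated list of the edges of `C (L-1)`, then `C (L-2)`, …, down to `C 0`. -/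
noncomputable def concatDesc {V : Type*} (C : ℕ → Finset (Sym2 V)) (L : ℕ) :
    List (Sym2 V) :=
  (List.range L).reverse.flatMap fun i => (C i).toList

open scoped Classical

noncomputable def gstep {V : Type*} (T : Finset (Sym2 V)) (e : Sym2 V) : Finset (Sym2 V) :=
  if ∀ f ∈ T, ¬ Shares e f then insert e T else T

lemma greedy_eq {V : Type*} (l : List (Sym2 V)) : greedy l = l.foldl gstep ∅ := rfl

lemma subset_gstep {V : Type*} (T : Finset (Sym2 V)) (e : Sym2 V) : T ⊆ gstep T e := by
  unfold gstep; split
  · exact Finset.subset_insert _ _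
  · exact Finset.Subset.refl _

lemma subset_foldl {V : Type*} : ∀ (l : List (Sym2 V)) (T : Finset (Sym2 V)),
    T ⊆ l.foldl gstep T
  | [], T => Finset.Subset.refl _
  | a :: l, T => (subset_gstep T a).trans (subset_foldl l (gstep T a))

lemma mem_foldl_prop {V : Type*} (P : Sym2 V → Prop) :
    ∀ (l : List (Sym2 V)) (T : Finset (Sym2 V)), (∀ f ∈ T, P f) → (∀ e ∈ l, P e) →
    ∀ f ∈ l.foldl gstep T, P f
  | [], T, hT, _ => hT
  | a :: l, T, hT, hl => by
    refine mem_foldl_prop P l (gstep T a) ?_ (fun e he => hl e (List.mem_cons_of_mem _ he))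
    intro f hf
    unfold gstep at hf
    split at hf
    · rcases Finset.mem_insert.1 hf with rfl | hf
      · exact hl f List.mem_cons_self
      · exact hT f hf
    · exact hT f hf

lemma blocked {V : Type*} : ∀ (l : List (Sym2 V)) (T : Finset (Sym2 V)) (e : Sym2 V),
    e ∈ l → e ∉ l.foldl gstep T → ∃ f ∈ l.foldl gstep T, Shares e f
  | [], T, e, he, _ => absurd he List.not_mem_nil
  | a :: l, T, e, he, hne => by
    by_cases hel : e ∈ l
    · exact blocked l (gstep T a) e hel hne
    · have : e = a := by
        rcases List.mem_cons.1 he with h | h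
        · exact h
        · exact absurd h hel
      subst this
      by_cases h : ∀ f ∈ T, ¬ Shares e f
      · exfalso
        apply hne
        apply subset_foldl l (gstep T e)
        unfold gstep
        rw [if_pos h]
        exact Finset.mem_insert_self _ _
      · push_neg at h
        obtain ⟨f, hf, hs⟩ := h
        refine ⟨f, subset_foldl l (gstep T e) (subset_gstep T e hf), hs⟩

lemma concatDesc_succ {V : Type*} (C : ℕ → Finset (Sym2 V)) (L : ℕ) :
    concatDesc C (L + 1) = (C L).toList ++ concatDesc C L := by
  simp [concatDesc, List.range_succ]

lemma concatDesc_split {V : Type*} (C : ℕ → Finset (Sym2 V)) :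
    ∀ (L i : ℕ), i < L → ∃ l₁ : List (Sym2 V),
      concatDesc C L = l₁ ++ concatDesc C (i + 1) ∧
      ∀ x ∈ l₁, ∃ j, i < j ∧ j < L ∧ x ∈ C j := by
  intro L
  induction L with
  | zero => intro i hi; omega
  | succ L ih =>
    intro i hi
    rcases Nat.lt_or_ge i L with h | h
    · obtain ⟨l₁, hl₁, hP⟩ := ih i h
      refine ⟨(C L).toList ++ l₁, by rw [concatDesc_succ, hl₁, List.append_assoc], ?_⟩
      intro x hx
      rcases List.mem_append.1 hx with hx | hx
      · exact ⟨L, h, lt_add_one L, Finset.mem_toList.1 hx⟩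
      · obtain ⟨j, h1, h2, h3⟩ := hP x hx
        exact ⟨j, h1, h2.trans (lt_add_one L), h3⟩
    · have : i = L := by omega
      subst this
      exact ⟨[], by simp, by simp⟩

/-- Let `C (L-1), C (L-2), …, C 0` be matchings in a finite simple graph `G` and let `T`
be the result of the greedy procedure applied to the concatenation of their edge lists
(in this order).  Then every edge `e ∈ C i` that is not in `T` is blocked by an edge
`f ∈ T` sharing an endpoint with `e` and belonging to some `C j` with `j ≥ i`. -/
theorem greedy_concat_blocking_level {V : Type*} [Fintype V]
    (G : SimpleGraph V) (L : ℕ) (C : ℕ → Finset (Sym2 V))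
    (hC : ∀ i < L, IsMatchingOf G.edgeSet (C i)) :
    ∀ i < L, ∀ e ∈ C i, e ∉ greedy (concatDesc C L) →
      ∃ f ∈ greedy (concatDesc C L), Shares e f ∧ ∃ j, i ≤ j ∧ j < L ∧ f ∈ C j := by
  intro i hi e he heT
  obtain ⟨l₁, hl₁, hP⟩ := concatDesc_split C L i hi
  have hsplit : concatDesc C L = (l₁ ++ (C i).toList) ++ concatDesc C i := by
    rw [hl₁, concatDesc_succ, List.append_assoc]
  set l₁' := l₁ ++ (C i).toList with hl₁'
  have hfold : greedy (concatDesc C L) = (concatDesc C i).foldl gstep (l₁'.foldl gstep ∅) := by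
    rw [greedy_eq, hsplit, List.foldl_append]
  set T₁ := l₁'.foldl gstep (∅ : Finset (Sym2 V)) with hT₁
  have heT₁ : e ∉ T₁ := fun h => heT (by rw [hfold]; exact subset_foldl _ _ h)
  have hel : e ∈ l₁' := List.mem_append.2 (Or.inr (Finset.mem_toList.2 he))
  obtain ⟨f, hf, hs⟩ := blocked l₁' ∅ e hel heT₁
  have hPf : ∃ j, i ≤ j ∧ j < L ∧ f ∈ C j := by
    refine mem_foldl_prop (fun x => ∃ j, i ≤ j ∧ j < L ∧ x ∈ C j) l₁' ∅ (by simp) ?_ f hf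
    intro x hx
    rcases List.mem_append.1 hx with hx | hx
    · obtain ⟨j, h1, h2, h3⟩ := hP x hx
      exact ⟨j, h1.le, h2, h3⟩
    · exact ⟨i, le_refl i, hi, Finset.mem_toList.1 hx⟩
  exact ⟨f, by rw [hfold]; exact subset_foldl _ _ hf, hs, hPf⟩
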